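/- For an ordered set partition β = (B_1,…,B_m) of [n] acting on a permutation π by the pop shuffle (moving the elements of B_1 to the back in their original relative order, then the elements of B_2 after them, and so on), the action is compatible with the monoid product: (α ∘ β) π = α(β π) for all ordered set partitions α, β and all permutations π. -/
import Mathlib


variable {α : Type*} [Fintype α] [DecidableEq α]

/-- `L` is an ordered set partition of the (finite) set of all elements of `α`:
a list of nonempty, pairwise disjoint blocks covering every element. -/
def IsOSP (L : List (Finset α)) : Prop :=
  (∀ b ∈ L, b ≠ ∅) ∧ L.Pairwise (fun a b => Disjoint a b) ∧ ∀ x : α, ∃ b ∈ L, x ∈ b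

/-- The refinement product of ordered set partitions: the blocks are the
nonempty intersections `a_i ∩ b_j`, ordered lexicographically in `(i, j)`. -/
def ospMul (L M : List (Finset α)) : List (Finset α) :=
  (L.flatMap fun a => M.map fun b => a ∩ b).filter (fun b => b ≠ ∅)

/-- The pop shuffle: for each block of `L` in order, list the elements of that
block in the relative order in which they occur in `π`. -/
def popShuffle (L : List (Finset α)) (π : List α) : List α :=
  L.flatMap fun b => π.filter (fun x => x ∈ b)

lemma flatMap_filter_eq {β γ : Type*} (l : List β) (p : β → Bool) (f : β → List γ)
    (h : ∀ x, ¬ p x → f x = []) :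
    (l.filter p).flatMap f = l.flatMap f := by
  induction l with
  | nil => simp
  | cons a l ih =>
    by_cases hp : p a <;> simp [hp, ih, h a]

/-- The pop shuffle action is compatible with the refinement product:
`(α ∘ β) π = α (β π)`. -/
theorem popShuffle_mul (L M : List (Finset α)) (π : List α)
    (hL : IsOSP L) (hM : IsOSP M) (hπ : π.Nodup ∧ ∀ x : α, x ∈ π) :
    popShuffle (ospMul L M) π = popShuffle L (popShuffle M π) := by
  unfold popShuffle ospMul
  rw [flatMap_filter_eq]
  · rw [List.flatMap_assoc]
    congr 1
    funext a
    rw [List.flatMap_map, List.filter_flatMap]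
    congr 1
    funext b
    rw [List.filter_filter]
    congr 1
    funext x
    simp [Finset.mem_inter, and_comm]
  · intro b hb
    simp only [ne_eq, decide_not, Bool.not_eq_true', decide_eq_false_iff_not,
      Decidable.not_not] at hb
    subst hb
    simp
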